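/- Let A and B be finite nonempty sets of points in ℝ², and let p ∈ A and q ∈ B. Then h(A ∪ B) ≤ h(A) + h(B) + 2‖p − q‖. -/

import Mathlib

noncomputable section

open Real intervalIntegral

/-- The Euclidean plane. -/
abbrev Plane := EuclideanSpace ℝ (Fin 2)

/-- Perimeter of a bounded set via Cauchy's formula. -/
noncomputable def perim (C : Set Plane) : ℝ :=
  ∫ θ in (0:ℝ)..(2 * Real.pi),
    sSup ((fun p : Plane => p 0 * Real.cos θ + p 1 * Real.sin θ) '' C)

private lemma intable_abs_cos' : ∀ a b : ℝ,
    IntervalIntegrable (fun θ => |Real.cos θ|) MeasureTheory.volume a b :=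
  fun a b => (Real.continuous_cos.abs).intervalIntegrable a b

private lemma int_abs_cos : ∫ θ in (0:ℝ)..(2*π), |Real.cos θ| = 4 := by
  have pi_pos := Real.pi_pos
  have h1 : ∫ θ in (0:ℝ)..(π/2), |Real.cos θ| = 1 := by
    rw [intervalIntegral.integral_congr (g := Real.cos) ?_, integral_cos]
    · simp
    · intro x hx
      rw [Set.uIcc_of_le (by positivity)] at hx
      exact abs_of_nonneg (Real.cos_nonneg_of_mem_Icc ⟨by linarith [hx.1], hx.2⟩)
  have h2 : ∫ θ in (π/2)..(3*π/2), |Real.cos θ| = 2 := by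
    rw [intervalIntegral.integral_congr (g := fun x => -Real.cos x) ?_]
    · rw [intervalIntegral.integral_neg, integral_cos]
      have : (3:ℝ)*π/2 = π + π/2 := by ring
      rw [this, Real.sin_add]
      simp
      norm_num
    · intro x hx
      rw [Set.uIcc_of_le (by linarith)] at hx
      exact abs_of_nonpos (Real.cos_nonpos_of_pi_div_two_le_of_le hx.1 (by linarith [hx.2]))
  have h3 : ∫ θ in (3*π/2)..(2*π), |Real.cos θ| = 1 := by
    rw [intervalIntegral.integral_congr (g := Real.cos) ?_, integral_cos]
    · have : (3:ℝ)*π/2 = π + π/2 := by ring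
      rw [this, Real.sin_add]
      simp
    · intro x hx
      rw [Set.uIcc_of_le (by linarith)] at hx
      show |Real.cos x| = Real.cos x
      rw [abs_of_nonneg]
      have : x = (x - 2*π) + 2*π := by ring
      rw [this, Real.cos_add_two_pi]
      exact Real.cos_nonneg_of_mem_Icc ⟨by linarith [hx.1], by linarith [hx.2]⟩
  have e1 := intervalIntegral.integral_add_adjacent_intervals
    (intable_abs_cos' 0 (π/2)) (intable_abs_cos' (π/2) (3*π/2))
  have e2 := intervalIntegral.integral_add_adjacent_intervals
    (intable_abs_cos' 0 (3*π/2)) (intable_abs_cos' (3*π/2) (2*π))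
  rw [← e2, ← e1, h1, h2, h3]; norm_num

private lemma int_abs_cos_shift (φ : ℝ) :
    ∫ θ in (0:ℝ)..(2*π), |Real.cos (θ - φ)| = 4 := by
  rw [intervalIntegral.integral_comp_sub_right (fun x => |Real.cos x|) φ]
  have hper : Function.Periodic (fun x => |Real.cos x|) (2*π) :=
    Real.cos_periodic.comp abs
  have := hper.intervalIntegral_add_eq (-φ) 0
  rw [show (0:ℝ) - φ = -φ by ring, show 2*π - φ = -φ + 2*π by ring, this,
    zero_add, int_abs_cos]

private lemma int_abs_lin (a b : ℝ) :
    ∫ θ in (0:ℝ)..(2*π), |a * Real.cos θ + b * Real.sin θ| = 4 * Real.sqrt (a^2 + b^2) := by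
  by_cases h : a = 0 ∧ b = 0
  · obtain ⟨ha, hb⟩ := h; simp [ha, hb]
  · set z : ℂ := ⟨a, b⟩ with hz
    have hz0 : z ≠ 0 := by
      simp only [ne_eq, Complex.ext_iff, Complex.zero_re, Complex.zero_im]
      tauto
    set r := ‖z‖ with hr
    set φ := Complex.arg z with hφ
    have ha : r * Real.cos φ = a := Complex.norm_mul_cos_arg z
    have hb : r * Real.sin φ = b := Complex.norm_mul_sin_arg z
    have hrval : r = Real.sqrt (a^2 + b^2) := by
      rw [hr, Complex.norm_def, Complex.normSq_apply]
      norm_num [sq]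
      rfl
    have hr0 : 0 ≤ r := norm_nonneg z
    have key : ∀ θ : ℝ, |a * Real.cos θ + b * Real.sin θ| = r * |Real.cos (θ - φ)| := by
      intro θ
      rw [← ha, ← hb, Real.cos_sub]
      rw [show r * Real.cos φ * Real.cos θ + r * Real.sin φ * Real.sin θ
          = r * (Real.cos θ * Real.cos φ + Real.sin θ * Real.sin φ) by ring,
        abs_mul, abs_of_nonneg hr0]
    calc ∫ θ in (0:ℝ)..(2*π), |a * Real.cos θ + b * Real.sin θ|
        = ∫ θ in (0:ℝ)..(2*π), r * |Real.cos (θ - φ)| := by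
          apply intervalIntegral.integral_congr; intro x _; exact key x
      _ = r * ∫ θ in (0:ℝ)..(2*π), |Real.cos (θ - φ)| := by
          rw [intervalIntegral.integral_const_mul]
      _ = 4 * Real.sqrt (a^2 + b^2) := by rw [int_abs_cos_shift, hrval]; ring

private lemma contS (C : Set Plane) (hC : C.Finite) (hne : C.Nonempty) :
    Continuous (fun θ => sSup ((fun p : Plane => p 0 * Real.cos θ + p 1 * Real.sin θ) '' C)) := by
  have hne' : hC.toFinset.Nonempty := by simpa using hne
  have heq : ∀ θ : ℝ, sSup ((fun p : Plane => p 0 * Real.cos θ + p 1 * Real.sin θ) '' C)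
      = hC.toFinset.sup' hne' (fun p => p 0 * Real.cos θ + p 1 * Real.sin θ) := by
    intro θ
    rw [Finset.sup'_eq_csSup_image, Set.Finite.coe_toFinset]
  simp only [heq]
  exact Continuous.finset_sup'_apply hne' (fun p _ => by continuity)

private lemma int_lin_zero (x : Plane) :
    ∫ θ in (0:ℝ)..(2*π), (x 0 * Real.cos θ + x 1 * Real.sin θ) = 0 := by
  rw [intervalIntegral.integral_add (f := fun θ => x 0 * Real.cos θ) (g := fun θ => x 1 * Real.sin θ)
      ((continuous_const.mul Real.continuous_cos : Continuous fun θ => x 0 * Real.cos θ).intervalIntegrable _ _)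
      ((continuous_const.mul Real.continuous_sin : Continuous fun θ => x 1 * Real.sin θ).intervalIntegrable _ _),
    intervalIntegral.integral_const_mul, intervalIntegral.integral_const_mul,
    integral_cos, integral_sin]
  simp

/-- bridging inequality: merging two finite sets costs at most twice
the distance between a point of each. -/
theorem perim_union_le_add_bridge
    (A B : Set Plane) (hA : A.Finite) (hAne : A.Nonempty)
    (hB : B.Finite) (hBne : B.Nonempty)
    (p q : Plane) (hp : p ∈ A) (hq : q ∈ B) :
    perim (A ∪ B) ≤ perim A + perim B + 2 * dist p q := by
  set f : ℝ → Plane → ℝ := fun θ x => x 0 * Real.cos θ + x 1 * Real.sin θ with hf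
  set SA : ℝ → ℝ := fun θ => sSup (f θ '' A) with hSA
  set SB : ℝ → ℝ := fun θ => sSup (f θ '' B) with hSB
  set SU : ℝ → ℝ := fun θ => sSup (f θ '' (A ∪ B)) with hSU
  set m : ℝ → ℝ := fun θ => min (f θ p) (f θ q) with hm
  have cSA : Continuous SA := contS A hA hAne
  have cSB : Continuous SB := contS B hB hBne
  have cSU : Continuous SU := contS (A ∪ B) (hA.union hB) (hAne.mono Set.subset_union_left)
  have cfp : Continuous (fun θ => f θ p) := by simp only [hf]; continuity
  have cfq : Continuous (fun θ => f θ q) := by simp only [hf]; continuity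
  have cm : Continuous m := cfp.min cfq
  -- pointwise bound
  have key : ∀ θ : ℝ, SU θ ≤ SA θ + SB θ - m θ := by
    intro θ
    have bddA : BddAbove (f θ '' A) := (hA.image _).bddAbove
    have bddB : BddAbove (f θ '' B) := (hB.image _).bddAbove
    have hfp : f θ p ≤ SA θ := le_csSup bddA ⟨p, hp, rfl⟩
    have hfq : f θ q ≤ SB θ := le_csSup bddB ⟨q, hq, rfl⟩
    have hU : SU θ = max (SA θ) (SB θ) := by
      simp only [hSU, Set.image_union]
      exact csSup_union bddA (hAne.image _) bddB (hBne.image _)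
    have h1 : m θ ≤ f θ p := min_le_left _ _
    have h2 : m θ ≤ f θ q := min_le_right _ _
    rw [hU]
    apply max_le <;> linarith
  -- integral of m
  have habs : ∫ θ in (0:ℝ)..(2*π), |f θ p - f θ q| = 4 * dist p q := by
    have hd : dist p q = Real.sqrt ((p 0 - q 0)^2 + (p 1 - q 1)^2) := by
      rw [EuclideanSpace.dist_eq]
      simp [Fin.sum_univ_two, Real.dist_eq, sq_abs]
    have : ∀ θ : ℝ, |f θ p - f θ q|
        = |(p 0 - q 0) * Real.cos θ + (p 1 - q 1) * Real.sin θ| := by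
      intro θ; simp only [hf]; ring_nf
    rw [intervalIntegral.integral_congr (fun x _ => this x), int_abs_lin, hd]
  have hintm : ∫ θ in (0:ℝ)..(2*π), m θ = -(2 * dist p q) := by
    have hmin : ∀ θ : ℝ, m θ = (f θ p + f θ q - |f θ p - f θ q|) / 2 := by
      intro θ
      rcases le_total (f θ p) (f θ q) with h | h
      · show min (f θ p) (f θ q) = _
        rw [min_eq_left h, abs_of_nonpos (by linarith)]; ring
      · show min (f θ p) (f θ q) = _
        rw [min_eq_right h, abs_of_nonneg (by linarith)]; ring
    rw [intervalIntegral.integral_congr (fun x _ => hmin x)]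
    have i1 : IntervalIntegrable (fun θ => f θ p + f θ q) MeasureTheory.volume 0 (2*π) :=
      (cfp.add cfq).intervalIntegrable _ _
    have i2 : IntervalIntegrable (fun θ => |f θ p - f θ q|) MeasureTheory.volume 0 (2*π) :=
      ((cfp.sub cfq).abs).intervalIntegrable _ _
    rw [intervalIntegral.integral_div, intervalIntegral.integral_sub i1 i2,
      intervalIntegral.integral_add (cfp.intervalIntegrable _ _) (cfq.intervalIntegrable _ _),
      habs]
    have := int_lin_zero p
    have := int_lin_zero q
    simp only [hf] at *
    rw [int_lin_zero p, int_lin_zero q]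
    ring
  -- put it together
  have hmono : ∫ θ in (0:ℝ)..(2*π), SU θ ≤ ∫ θ in (0:ℝ)..(2*π), (SA θ + SB θ - m θ) := by
    apply intervalIntegral.integral_mono_on (by positivity)
      (cSU.intervalIntegrable _ _) (((cSA.add cSB).sub cm).intervalIntegrable _ _)
    intro x _; exact key x
  have hsplit : ∫ θ in (0:ℝ)..(2*π), (SA θ + SB θ - m θ)
      = (∫ θ in (0:ℝ)..(2*π), SA θ) + (∫ θ in (0:ℝ)..(2*π), SB θ)
        - ∫ θ in (0:ℝ)..(2*π), m θ := by
    rw [intervalIntegral.integral_sub (f := fun θ => SA θ + SB θ) ((cSA.add cSB : Continuous fun θ => SA θ + SB θ).intervalIntegrable _ _)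
        (cm.intervalIntegrable _ _),
      intervalIntegral.integral_add (cSA.intervalIntegrable _ _) (cSB.intervalIntegrable _ _)]
  have hpU : perim (A ∪ B) = ∫ θ in (0:ℝ)..(2*π), SU θ := rfl
  have hpA : perim A = ∫ θ in (0:ℝ)..(2*π), SA θ := rfl
  have hpB : perim B = ∫ θ in (0:ℝ)..(2*π), SB θ := rfl
  rw [hpU, hpA, hpB]
  rw [hsplit, hintm] at hmono
  linarith

end
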